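/- For every real number x with 0 ≤ x < 1, the following Euler-type identity holds: ∏_{i=0}^{∞} 1/(1 − 2^{−i} x) = ∑_{i=0}^{∞} x^i · ∏_{j=1}^{i} 1/(1 − 2^{−j}); in particular the infinite product over i ≥ 0 converges and the series on the right converges absolutely. -/

import Mathlib

open Finset Filter Topology

namespace EulerQAux

noncomputable section

lemma one_le_prod_real {s : Finset ℕ} {f : ℕ → ℝ} (h : ∀ i ∈ s, 1 ≤ f i) :
    1 ≤ ∏ i ∈ s, f i := by
  calc (1:ℝ) = ∏ _i ∈ s, (1:ℝ) := by simp
    _ ≤ _ := Finset.prod_le_prod (fun _ _ => zero_le_one) h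

lemma prod_le_prod_subset_real {f : ℕ → ℝ} (h1 : ∀ i, 1 ≤ f i) {s t : Finset ℕ}
    (hst : s ⊆ t) : ∏ i ∈ s, f i ≤ ∏ i ∈ t, f i := by
  rw [← Finset.prod_sdiff hst]
  have h0 : (0:ℝ) ≤ ∏ i ∈ s, f i :=
    Finset.prod_nonneg fun i _ => le_trans zero_le_one (h1 i)
  have hge : (1:ℝ) ≤ ∏ i ∈ t \ s, f i := one_le_prod_real fun i _ => h1 i
  calc ∏ i ∈ s, f i = 1 * ∏ i ∈ s, f i := (one_mul _).symm
    _ ≤ (∏ i ∈ t \ s, f i) * ∏ i ∈ s, f i := mul_le_mul_of_nonneg_right hge h0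

/-- The coefficients `c i = ∏_{j=1}^i 1/(1 - 2^{-j})`. -/
def c (i : ℕ) : ℝ := ∏ j ∈ Finset.Icc 1 i, 1 / (1 - (2⁻¹ : ℝ) ^ j)

lemma two_zpow_neg (j : ℕ) : (2 : ℝ) ^ (-(j : ℤ)) = (2⁻¹ : ℝ) ^ j := by
  simp [zpow_neg, inv_pow]

lemma c_zero : c 0 = 1 := by simp [c]

lemma c_succ (i : ℕ) : c (i + 1) = c i * (1 / (1 - (2⁻¹ : ℝ) ^ (i + 1))) := by
  rw [c, c, ← Finset.prod_Icc_succ_top (by omega : 1 ≤ i + 1)]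

lemma q_pow_le_half {j : ℕ} (hj : 1 ≤ j) : (2⁻¹ : ℝ) ^ j ≤ 2⁻¹ := by
  calc (2⁻¹ : ℝ) ^ j ≤ (2⁻¹ : ℝ) ^ 1 :=
        pow_le_pow_of_le_one (by norm_num) (by norm_num) hj
    _ = 2⁻¹ := pow_one _

lemma one_sub_q_pow_ge {j : ℕ} (hj : 1 ≤ j) : (2⁻¹ : ℝ) ≤ 1 - (2⁻¹ : ℝ) ^ j := by
  have := q_pow_le_half hj; linarith

lemma one_sub_q_pow_pos {j : ℕ} (hj : 1 ≤ j) : (0 : ℝ) < 1 - (2⁻¹ : ℝ) ^ j := by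
  have := one_sub_q_pow_ge hj; linarith

lemma factor_le (j : ℕ) (hj : 1 ≤ j) :
    1 / (1 - (2⁻¹ : ℝ) ^ j) ≤ 1 + 2 * (2⁻¹ : ℝ) ^ j := by
  rw [div_le_iff₀ (one_sub_q_pow_pos hj)]
  have h1 : (2⁻¹ : ℝ) ^ j ≤ 2⁻¹ := q_pow_le_half hj
  have h2 : (0 : ℝ) ≤ (2⁻¹ : ℝ) ^ j := by positivity
  nlinarith

lemma one_le_c (i : ℕ) : 1 ≤ c i := by
  rw [c]
  calc (1:ℝ) = ∏ _j ∈ Finset.Icc 1 i, (1:ℝ) := by simp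
    _ ≤ _ := Finset.prod_le_prod (fun _ _ => zero_le_one) (fun j hj => ?_)
  have hj1 : 1 ≤ j := (Finset.mem_Icc.mp hj).1
  rw [le_div_iff₀ (one_sub_q_pow_pos hj1)]
  have : (0 : ℝ) < (2⁻¹ : ℝ) ^ j := by positivity
  linarith

lemma c_pos (i : ℕ) : 0 < c i := lt_of_lt_of_le one_pos (one_le_c i)

lemma c_le (i : ℕ) : c i ≤ Real.exp 4 := by
  have h1 : c i ≤ ∏ j ∈ Finset.Icc 1 i, Real.exp (2 * (2⁻¹ : ℝ) ^ j) := by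
    rw [c]
    refine Finset.prod_le_prod (fun j hj => ?_) (fun j hj => ?_)
    · have hj1 := (Finset.mem_Icc.mp hj).1
      exact (one_div_pos.mpr (one_sub_q_pow_pos hj1)).le
    · have hj1 := (Finset.mem_Icc.mp hj).1
      calc 1 / (1 - (2⁻¹ : ℝ) ^ j) ≤ 1 + 2 * (2⁻¹ : ℝ) ^ j := factor_le j hj1
        _ ≤ Real.exp (2 * (2⁻¹ : ℝ) ^ j) := by
            have := Real.add_one_le_exp (2 * (2⁻¹ : ℝ) ^ j); linarith
  rw [← Real.exp_sum] at h1
  refine h1.trans (Real.exp_le_exp.mpr ?_)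
  have h2 : ∑ j ∈ Finset.Icc 1 i, 2 * (2⁻¹ : ℝ) ^ j ≤ ∑ j ∈ Finset.Icc 1 i, 2 * (2⁻¹ : ℝ) ^ j := le_refl _
  calc ∑ j ∈ Finset.Icc 1 i, 2 * (2⁻¹ : ℝ) ^ j
      ≤ ∑' j : ℕ, 2 * (2⁻¹ : ℝ) ^ j := by
        refine Summable.sum_le_tsum _ (fun j _ => by positivity) ?_
        exact (summable_geometric_of_lt_one (by norm_num) (by norm_num)).mul_left 2
    _ = 2 * (1 - 2⁻¹)⁻¹ := by
        rw [tsum_mul_left, tsum_geometric_of_lt_one (by norm_num) (by norm_num)]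
    _ ≤ 4 := by norm_num

lemma c_rec (i : ℕ) : c (i + 1) * (1 - (2⁻¹ : ℝ) ^ (i + 1)) = c i := by
  rw [c_succ, mul_assoc, one_div, inv_mul_cancel₀ (ne_of_gt (one_sub_q_pow_pos (by omega))),
    mul_one]

/-- Summability of the series terms. -/
lemma summable_a {y : ℝ} (hy0 : 0 ≤ y) (hy1 : y < 1) :
    Summable (fun i : ℕ => y ^ i * c i) := by
  refine Summable.of_nonneg_of_le (fun i => mul_nonneg (by positivity) (c_pos i).le)
    (fun i => ?_) ((summable_geometric_of_lt_one hy0 hy1).mul_right (Real.exp 4))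
  · exact mul_le_mul_of_nonneg_left (c_le i) (by positivity)

/-- The generating function. -/
def G (y : ℝ) : ℝ := ∑' i : ℕ, y ^ i * c i

lemma G_funeq {y : ℝ} (hy0 : 0 ≤ y) (hy1 : y < 1) : (1 - y) * G y = G (y / 2) := by
  have hs : Summable (fun i : ℕ => y ^ i * c i) := summable_a hy0 hy1
  have hs2 : Summable (fun i : ℕ => (y / 2) ^ i * c i) :=
    summable_a (by linarith) (by linarith)
  set d : ℕ → ℝ := fun i => Nat.rec 0 (fun i _ => y ^ (i + 1) * c i) i with hd
  have hd0 : d 0 = 0 := rfl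
  have hdsucc : ∀ i, d (i + 1) = y * (y ^ i * c i) := by
    intro i; simp only [hd]; ring
  have hsd : Summable d := by
    rw [← summable_nat_add_iff 1]
    simpa only [hdsucc] using hs.mul_left y
  have key : ∀ i : ℕ, y ^ i * c i = (y / 2) ^ i * c i + d i := by
    intro i
    cases i with
    | zero => simp [hd0, c_zero]
    | succ i =>
      rw [hdsucc]
      have hrec := c_rec i
      have : (y / 2) ^ (i + 1) = y ^ (i + 1) * (2⁻¹ : ℝ) ^ (i + 1) := by
        rw [div_eq_mul_inv, mul_pow]
      rw [this, ← hrec]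
      ring
  have htsum : G y = G (y / 2) + ∑' i, d i := by
    rw [G, G, ← Summable.tsum_add hs2 hsd]
    exact tsum_congr key
  have htd : ∑' i, d i = y * G y := by
    rw [Summable.tsum_eq_zero_add hsd, hd0]
    simp only [hdsucc]
    rw [tsum_mul_left, zero_add, G]
  have := htsum
  rw [htd] at this
  linarith

lemma G_ge_one {y : ℝ} (hy0 : 0 ≤ y) (hy1 : y < 1) : 1 ≤ G y := by
  have hs : Summable (fun i : ℕ => y ^ i * c i) := summable_a hy0 hy1
  have h0 : (1 : ℝ) = y ^ 0 * c 0 := by simp [c_zero]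
  rw [G, h0]
  exact Summable.le_tsum hs 0 (fun j _ => mul_nonneg (by positivity) (c_pos j).le)

lemma G_le {y : ℝ} (hy0 : 0 ≤ y) (hy : y ≤ 2⁻¹) :
    G y ≤ 1 + 2 * Real.exp 4 * y := by
  have hy1 : y < 1 := lt_of_le_of_lt hy (by norm_num)
  have hs : Summable (fun i : ℕ => y ^ i * c i) := summable_a hy0 hy1
  rw [G, Summable.tsum_eq_zero_add hs]
  simp only [pow_zero, c_zero, one_mul]
  have h1 : ∑' i : ℕ, y ^ (i + 1) * c (i + 1) ≤ ∑' i : ℕ, y * (Real.exp 4 * 2⁻¹ ^ i) := by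
    refine Summable.tsum_le_tsum (fun i => ?_) ?_ ?_
    · calc y ^ (i + 1) * c (i + 1) ≤ y ^ (i + 1) * Real.exp 4 :=
            mul_le_mul_of_nonneg_left (c_le _) (by positivity)
        _ = y * (Real.exp 4 * y ^ i) := by ring
        _ ≤ y * (Real.exp 4 * 2⁻¹ ^ i) := by
            refine mul_le_mul_of_nonneg_left (mul_le_mul_of_nonneg_left
              (pow_le_pow_left₀ hy0 hy i) (by positivity)) hy0
    · rw [← summable_nat_add_iff 1] at hs; exact hs
    · exact (((summable_geometric_of_lt_one (by norm_num) (by norm_num)).mul_left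
        (Real.exp 4)).mul_left y)
  have h2 : ∑' i : ℕ, y * (Real.exp 4 * 2⁻¹ ^ i) = y * (Real.exp 4 * 2) := by
    rw [tsum_mul_left, tsum_mul_left, tsum_geometric_of_lt_one (by norm_num) (by norm_num)]
    norm_num
  linarith [h1.trans_eq h2]

end

end EulerQAux

open EulerQAux

theorem euler_q_series_identity (x : ℝ) (h₀ : 0 ≤ x) (h₁ : x < 1) :
    Multipliable (fun i : ℕ => 1 / (1 - (2 : ℝ) ^ (-(i : ℤ)) * x)) ∧
      Summable (fun i : ℕ =>
        |x ^ i * ∏ j ∈ Finset.Icc 1 i, 1 / (1 - (2 : ℝ) ^ (-(j : ℤ)))|) ∧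
      ∏' i : ℕ, 1 / (1 - (2 : ℝ) ^ (-(i : ℤ)) * x)
        = ∑' i : ℕ, x ^ i * ∏ j ∈ Finset.Icc 1 i, 1 / (1 - (2 : ℝ) ^ (-(j : ℤ))) := by
  -- rewrite the statement functions in terms of `(2⁻¹)^i` and `c`
  have hfun : (fun i : ℕ => 1 / (1 - (2 : ℝ) ^ (-(i : ℤ)) * x))
      = fun i : ℕ => 1 / (1 - (2⁻¹ : ℝ) ^ i * x) := by
    funext i; rw [two_zpow_neg]
  have hc : ∀ i : ℕ, (∏ j ∈ Finset.Icc 1 i, 1 / (1 - (2 : ℝ) ^ (-(j : ℤ)))) = c i := by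
    intro i
    rw [c]
    exact Finset.prod_congr rfl fun j _ => by rw [two_zpow_neg]
  have hser : (fun i : ℕ => x ^ i * ∏ j ∈ Finset.Icc 1 i, 1 / (1 - (2 : ℝ) ^ (-(j : ℤ))))
      = fun i : ℕ => x ^ i * c i := by
    funext i; rw [hc]
  -- basic positivity facts
  have hqx : ∀ i : ℕ, (2⁻¹ : ℝ) ^ i * x < 1 := by
    intro i
    calc (2⁻¹ : ℝ) ^ i * x ≤ 1 * x := by
          refine mul_le_mul_of_nonneg_right (pow_le_one₀ (by norm_num) (by norm_num)) h₀
      _ < 1 := by linarith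
  have hqx0 : ∀ i : ℕ, 0 ≤ (2⁻¹ : ℝ) ^ i * x := fun i => by positivity
  have hfge1 : ∀ i : ℕ, (1 : ℝ) ≤ 1 / (1 - (2⁻¹ : ℝ) ^ i * x) := by
    intro i
    rw [le_div_iff₀ (by linarith [hqx i])]
    linarith [hqx0 i]
  -- key iteration: G x = (∏_{i<n} 1/(1 - 2^{-i} x)) * G (2^{-n} x)
  have hiter : ∀ n : ℕ,
      G x = (∏ i ∈ Finset.range n, 1 / (1 - (2⁻¹ : ℝ) ^ i * x)) * G ((2⁻¹ : ℝ) ^ n * x) := by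
    intro n
    induction n with
    | zero => simp
    | succ n ih =>
      rw [Finset.prod_range_succ, ih]
      have hy0 := hqx0 n
      have hy1 := hqx n
      have hfe := G_funeq hy0 hy1
      have hhalf : (2⁻¹ : ℝ) ^ n * x / 2 = (2⁻¹ : ℝ) ^ (n + 1) * x := by ring
      rw [hhalf] at hfe
      have hpos : (0:ℝ) < 1 - (2⁻¹ : ℝ) ^ n * x := by linarith
      rw [← hfe, mul_assoc]
      congr 1
      rw [one_div, ← mul_assoc, inv_mul_cancel₀ (ne_of_gt hpos), one_mul]
  -- G(2^{-n} x) → 1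
  have htend0 : Tendsto (fun n : ℕ => (2⁻¹ : ℝ) ^ n * x) atTop (𝓝 0) := by
    simpa using (tendsto_pow_atTop_nhds_zero_of_lt_one (by norm_num : (0:ℝ) ≤ 2⁻¹)
      (by norm_num)).mul_const x
  have htendG : Tendsto (fun n : ℕ => G ((2⁻¹ : ℝ) ^ n * x)) atTop (𝓝 1) := by
    have hub : Tendsto (fun n : ℕ => 1 + 2 * Real.exp 4 * ((2⁻¹ : ℝ) ^ n * x)) atTop (𝓝 1) := by
      have := htend0.const_mul (2 * Real.exp 4)
      have h := this.const_add 1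
      simpa using h
    refine tendsto_of_tendsto_of_tendsto_of_le_of_le' tendsto_const_nhds hub ?_ ?_
    · exact Eventually.of_forall fun n => G_ge_one (hqx0 n) (hqx n)
    · filter_upwards [eventually_ge_atTop 1] with n hn
      refine G_le (hqx0 n) ?_
      calc (2⁻¹ : ℝ) ^ n * x ≤ (2⁻¹ : ℝ) ^ n * 1 :=
            mul_le_mul_of_nonneg_left (le_of_lt h₁) (by positivity)
        _ = (2⁻¹ : ℝ) ^ n := mul_one _
        _ ≤ 2⁻¹ := q_pow_le_half hn
  -- partial products tend to G x
  have hGpos : ∀ n : ℕ, (0:ℝ) < G ((2⁻¹ : ℝ) ^ n * x) :=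
    fun n => lt_of_lt_of_le one_pos (G_ge_one (hqx0 n) (hqx n))
  have hP : ∀ n : ℕ, (∏ i ∈ Finset.range n, 1 / (1 - (2⁻¹ : ℝ) ^ i * x))
      = G x / G ((2⁻¹ : ℝ) ^ n * x) := by
    intro n
    rw [eq_div_iff (ne_of_gt (hGpos n))]
    exact (hiter n).symm
  have htendP : Tendsto (fun n : ℕ => ∏ i ∈ Finset.range n, 1 / (1 - (2⁻¹ : ℝ) ^ i * x))
      atTop (𝓝 (G x)) := by
    have : Tendsto (fun n : ℕ => G x / G ((2⁻¹ : ℝ) ^ n * x)) atTop (𝓝 (G x / 1)) :=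
      tendsto_const_nhds.div htendG one_ne_zero
    rw [div_one] at this
    exact this.congr fun n => (hP n).symm
  -- HasProd via the LUB criterion
  have hmono : Monotone (fun n : ℕ => ∏ i ∈ Finset.range n, 1 / (1 - (2⁻¹ : ℝ) ^ i * x)) := by
    intro m n hmn
    exact prod_le_prod_subset_real hfge1 (Finset.range_subset_range.mpr hmn)
  have hlub1 : IsLUB (Set.range fun n : ℕ => ∏ i ∈ Finset.range n, 1 / (1 - (2⁻¹ : ℝ) ^ i * x))
      (G x) := isLUB_of_tendsto_atTop hmono htendP
  have hlub : IsLUB (Set.range fun s : Finset ℕ => ∏ i ∈ s, 1 / (1 - (2⁻¹ : ℝ) ^ i * x))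
      (G x) := by
    constructor
    · rintro _ ⟨s, rfl⟩
      obtain ⟨n, hn⟩ : ∃ n, s ⊆ Finset.range n := ⟨(s.sup id) + 1, fun i hi =>
        Finset.mem_range.mpr (Nat.lt_succ_of_le (Finset.le_sup (f := id) hi))⟩
      calc ∏ i ∈ s, 1 / (1 - (2⁻¹ : ℝ) ^ i * x)
          ≤ ∏ i ∈ Finset.range n, 1 / (1 - (2⁻¹ : ℝ) ^ i * x) :=
            prod_le_prod_subset_real hfge1 hn
        _ ≤ G x := hlub1.1 ⟨n, rfl⟩
    · intro b hb
      refine hlub1.2 ?_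
      rintro _ ⟨n, rfl⟩
      exact hb ⟨Finset.range n, rfl⟩
  have hmonoset : Monotone (fun s : Finset ℕ => ∏ i ∈ s, 1 / (1 - (2⁻¹ : ℝ) ^ i * x)) :=
    fun s t hst => prod_le_prod_subset_real hfge1 hst
  have hhasProd : HasProd (fun i : ℕ => 1 / (1 - (2⁻¹ : ℝ) ^ i * x)) (G x) :=
    tendsto_atTop_isLUB hmonoset hlub
  -- assemble
  refine ⟨?_, ?_, ?_⟩
  · rw [hfun]; exact hhasProd.multipliable
  · have : ∀ i : ℕ, |x ^ i * ∏ j ∈ Finset.Icc 1 i, 1 / (1 - (2 : ℝ) ^ (-(j : ℤ)))|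
        = x ^ i * c i := by
      intro i
      rw [hc, abs_of_nonneg (mul_nonneg (by positivity) (c_pos i).le)]
    refine Summable.congr (summable_a h₀ h₁) fun i => (this i).symm
  · rw [hfun, hhasProd.tprod_eq, hser]
    rfl
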